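/- arXiv:1811.10387 — 2 statements merged into one kernel-verified Lean document; each statement's English description precedes it below -/
import Mathlib

section
/- Let μ be a positive Borel measure on ℂ, finite on compact sets, satisfying the Blaschke condition near infinity in the upper half-plane, with balayage μ^bal. (1) If g : (0,∞) → (0,∞) satisfies g(r) > r for all r > 0, then for every r > 0 one has μ^bal({z : |z| ≤ r}) ≤ μ({z : |z| ≤ g(r)}) + (2·r·g(r)²/(π·(g(r) − r)²)) · ∫_{{|z| ≥ g(r)}} |Im z|/|z|² dμ(z). (2) If limsup_{r→∞} μ({z : |z| ≤ r})/r^p < ∞ for some p ≥ 0, then limsup_{r→∞} μ^bal({z : |z| ≤ r})/r^p < ∞; and if p ≥ 1 one has the sharp estimate limsup_{r→∞} μ^bal({z : |z| ≤ r})/r^p ≤ limsup_{r→∞} μ({z : |z| ≤ r})/r^p. -/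
open MeasureTheory Filter Set
open scoped ENNReal

/-- The Poisson kernel of the upper half-plane at `z`, evaluated at `t ∈ ℝ`. -/
noncomputable def poisson (z : ℂ) (t : ℝ) : ℝ :=
  (1 / Real.pi) * z.im / ((t - z.re) ^ 2 + z.im ^ 2)

/-- The harmonic measure `ω(z,B)` of a Borel set `B ⊆ ℂ` at a point `z` of the upper
half-plane: the integral of the Poisson kernel over the real trace of `B`. -/
noncomputable def omegaUHP (z : ℂ) (B : Set ℂ) : ℝ :=
  ∫ t in {t : ℝ | (t : ℂ) ∈ B}, poisson z t

/-- The balayage of a positive measure `μ` on `ℂ` out of the upper half-plane, as a set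
function: `μ^bal(B) = ∫_{Im z>0} ω(z,B) dμ(z) + μ(B ∩ {Im z ≤ 0})`. -/
noncomputable def balUHP (μ : Measure ℂ) (B : Set ℂ) : ℝ≥0∞ :=
  (∫⁻ z in {z : ℂ | 0 < z.im}, ENNReal.ofReal (omegaUHP z B) ∂μ)
    + μ (B ∩ {z : ℂ | z.im ≤ 0})

lemma poisson_nonneg {z : ℂ} (hz : 0 < z.im) (t : ℝ) : 0 ≤ poisson z t := by
  unfold poisson; positivity

lemma poisson_eq {z : ℂ} (hz : 0 < z.im) (t : ℝ) :
    poisson z t = (1 / (Real.pi * z.im)) * (1 + ((t - z.re) / z.im) ^ 2)⁻¹ := by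
  have h0 : z.im ≠ 0 := hz.ne'
  have hd : (t - z.re) ^ 2 + z.im ^ 2 > 0 := by positivity
  have h2 : (1 + ((t - z.re) / z.im) ^ 2) = ((t - z.re) ^ 2 + z.im ^ 2) / z.im ^ 2 := by
    field_simp; ring
  unfold poisson
  rw [h2]
  have hpi := Real.pi_ne_zero
  field_simp

lemma integrable_poisson {z : ℂ} (hz : 0 < z.im) : Integrable (poisson z) := by
  have h0 : z.im ≠ 0 := hz.ne'
  have h1 : Integrable (fun t : ℝ => (1 + ((t - z.re) / z.im) ^ 2)⁻¹) :=
    (integrable_inv_one_add_sq.comp_div h0).comp_sub_right z.re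
  exact (h1.const_mul _).congr (by
    filter_upwards with t using (poisson_eq hz t).symm)

lemma integral_poisson {z : ℂ} (hz : 0 < z.im) : ∫ t : ℝ, poisson z t = 1 := by
  have h0 : z.im ≠ 0 := hz.ne'
  have e1 : ∫ t : ℝ, poisson z t
      = (1 / (Real.pi * z.im)) * ∫ t : ℝ, (1 + ((t - z.re) / z.im) ^ 2)⁻¹ := by
    rw [← integral_const_mul]
    congr 1; funext t; exact poisson_eq hz t
  have e2 : ∫ t : ℝ, (1 + ((t - z.re) / z.im) ^ 2)⁻¹
      = ∫ t : ℝ, (1 + (t / z.im) ^ 2)⁻¹ := by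
    exact integral_sub_right_eq_self (fun t => (1 + (t / z.im) ^ 2)⁻¹) z.re
  have e3 : ∫ t : ℝ, (1 + (t / z.im) ^ 2)⁻¹ = |z.im| • ∫ t : ℝ, (1 + t ^ 2)⁻¹ :=
    MeasureTheory.Measure.integral_comp_div (fun t : ℝ => (1 + t ^ 2)⁻¹) z.im
  rw [e1, e2, e3, integral_univ_inv_one_add_sq, abs_of_pos hz]
  field_simp; ring

lemma omega_le_one {z : ℂ} (hz : 0 < z.im) (B : Set ℂ) : omegaUHP z B ≤ 1 := by
  unfold omegaUHP
  rw [← integral_poisson hz]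
  exact setIntegral_le_integral (integrable_poisson hz)
    (Filter.Eventually.of_forall (poisson_nonneg hz))

lemma omega_nonneg {z : ℂ} (hz : 0 < z.im) (B : Set ℂ) : 0 ≤ omegaUHP z B :=
  setIntegral_nonneg_of_ae (Filter.Eventually.of_forall fun t => poisson_nonneg hz t)

lemma trace_disc (r : ℝ) :
    {t : ℝ | (t : ℂ) ∈ {z : ℂ | ‖z‖ ≤ r}} = Icc (-r) r := by
  ext t
  simp [abs_le]

lemma poisson_bound {z : ℂ} (hz : 0 < z.im) {r g : ℝ} (hr : 0 < r) (hg : r < g)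
    (hzg : g ≤ ‖z‖) {t : ℝ} (ht : t ∈ Icc (-r) r) :
    poisson z t ≤ (1 / Real.pi) * z.im * g ^ 2 / ((g - r) ^ 2 * ‖z‖ ^ 2) := by
  have hg0 : 0 < g := hr.trans hg
  have ha0 : 0 < ‖z‖ := hg0.trans_le hzg
  have habs : |t| ≤ r := abs_le.2 ⟨ht.1, ht.2⟩
  have h1 : ‖z‖ - r ≤ ‖z - (t : ℂ)‖ := by
    have h := norm_sub_norm_le z (t : ℂ)
    rw [Complex.norm_real, Real.norm_eq_abs] at h
    have : ‖z - (t : ℂ)‖ = ‖z - (t : ℂ)‖ := rfl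
    rw [this]
    linarith
  have h2 : ‖z‖ * (g - r) / g ≤ ‖z‖ - r := by
    rw [div_le_iff₀ hg0]; nlinarith
  have h3 : (0:ℝ) ≤ ‖z‖ * (g - r) / g :=
    div_nonneg (mul_nonneg (norm_nonneg z) (by linarith)) hg0.le
  have h4 : (‖z‖ * (g - r) / g) ^ 2 ≤ ‖z - (t : ℂ)‖ ^ 2 := by
    nlinarith [h2.trans h1]
  have h5 : ‖z - (t : ℂ)‖ ^ 2 = (t - z.re) ^ 2 + z.im ^ 2 := by
    rw [Complex.sq_norm, Complex.normSq_apply]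
    simp [Complex.sub_re, Complex.sub_im]
    ring
  have h6 : ‖z‖ ^ 2 * (g - r) ^ 2 / g ^ 2 ≤ (t - z.re) ^ 2 + z.im ^ 2 := by
    rw [← h5]
    calc ‖z‖ ^ 2 * (g - r) ^ 2 / g ^ 2
        = (‖z‖ * (g - r) / g) ^ 2 := by ring
      _ ≤ _ := h4
  have h7 : ‖z‖ ^ 2 * (g - r) ^ 2 ≤ g ^ 2 * ((t - z.re) ^ 2 + z.im ^ 2) := by
    have := mul_le_mul_of_nonneg_left h6 (sq_nonneg g)
    rw [mul_div_cancel₀ _ (by positivity : (g:ℝ) ^ 2 ≠ 0)] at this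
    linarith
  have him : (0:ℝ) < (1 / Real.pi) * z.im := by positivity
  unfold poisson
  rw [div_le_div_iff₀ (by nlinarith [sq_nonneg (t - z.re)]) (mul_pos (pow_pos (by linarith : (0:ℝ) < g - r) 2) (pow_pos ha0 2))]
  nlinarith [mul_le_mul_of_nonneg_left h7 him.le]

lemma omega_disc_le {z : ℂ} (hz : 0 < z.im) {r g : ℝ} (hr : 0 < r) (hg : r < g)
    (hzg : g ≤ ‖z‖) :
    omegaUHP z {w : ℂ | ‖w‖ ≤ r}
      ≤ 2 * r * g ^ 2 / (Real.pi * (g - r) ^ 2) * (z.im / ‖z‖ ^ 2) := by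
  have hg0 : 0 < g := hr.trans hg
  have ha0 : 0 < ‖z‖ := hg0.trans_le hzg
  have hvol : volume (Icc (-r) r) < ⊤ := by
    simp [Real.volume_Icc]
  have hb := norm_setIntegral_le_of_norm_le_const (μ := volume) (s := Icc (-r) r)
    (f := poisson z)
    (C := (1 / Real.pi) * z.im * g ^ 2 / ((g - r) ^ 2 * ‖z‖ ^ 2)) hvol
    (fun t ht => by
      rw [Real.norm_eq_abs, abs_of_nonneg (poisson_nonneg hz t)]
      exact poisson_bound hz hr hg hzg ht)
  unfold omegaUHP
  rw [trace_disc]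
  refine le_trans (le_trans (le_abs_self _) hb) ?_
  rw [measureReal_def, Real.volume_Icc, ENNReal.toReal_ofReal (by linarith)]
  have hgr : g - r ≠ 0 := by linarith
  have hpi : Real.pi ≠ 0 := Real.pi_ne_zero
  have : (1 / Real.pi) * z.im * g ^ 2 / ((g - r) ^ 2 * ‖z‖ ^ 2) * (r - -r)
      = 2 * r * g ^ 2 / (Real.pi * (g - r) ^ 2) * (z.im / ‖z‖ ^ 2) := by
    field_simp
    ring
  rw [this]

lemma measurable_im_pos : MeasurableSet {z : ℂ | 0 < z.im} :=
  measurableSet_lt measurable_const Complex.measurable_im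

lemma main_est (μ : Measure ℂ) {r g : ℝ} (hr : 0 < r) (hg : r < g) :
    balUHP μ {z : ℂ | ‖z‖ ≤ r}
      ≤ μ {z : ℂ | ‖z‖ ≤ g}
        + ENNReal.ofReal (2 * r * g ^ 2 / (Real.pi * (g - r) ^ 2)) *
            ∫⁻ z in {z : ℂ | 0 < z.im ∧ g ≤ ‖z‖},
              ENNReal.ofReal (z.im / ‖z‖ ^ 2) ∂μ := by
  have habs : Measurable (fun z : ℂ => ‖z‖) := continuous_norm.measurable
  set S1 : Set ℂ := {z : ℂ | 0 < z.im ∧ ‖z‖ ≤ g} with hS1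
  set S2 : Set ℂ := {z : ℂ | 0 < z.im ∧ g ≤ ‖z‖} with hS2
  have hS1m : MeasurableSet S1 := measurable_im_pos.inter (measurableSet_le habs measurable_const)
  have hS2m : MeasurableSet S2 := measurable_im_pos.inter (measurableSet_le measurable_const habs)
  set C := ENNReal.ofReal (2 * r * g ^ 2 / (Real.pi * (g - r) ^ 2)) with hC
  set I := ∫⁻ z in S2, ENNReal.ofReal (z.im / ‖z‖ ^ 2) ∂μ with hI
  have hsub : {z : ℂ | 0 < z.im} ⊆ S1 ∪ S2 := by
    intro z hz
    rcases le_total (‖z‖) g with h | h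
    · exact Or.inl ⟨hz, h⟩
    · exact Or.inr ⟨hz, h⟩
  have step1 : (∫⁻ z in {z : ℂ | 0 < z.im},
      ENNReal.ofReal (omegaUHP z {z : ℂ | ‖z‖ ≤ r}) ∂μ)
      ≤ (∫⁻ z in S1, ENNReal.ofReal (omegaUHP z {z : ℂ | ‖z‖ ≤ r}) ∂μ)
        + ∫⁻ z in S2, ENNReal.ofReal (omegaUHP z {z : ℂ | ‖z‖ ≤ r}) ∂μ := by
    refine le_trans (lintegral_mono' (Measure.restrict_mono hsub le_rfl) le_rfl) ?_
    exact lintegral_union_le _ _ _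
  have b1 : (∫⁻ z in S1, ENNReal.ofReal (omegaUHP z {z : ℂ | ‖z‖ ≤ r}) ∂μ) ≤ μ S1 := by
    calc (∫⁻ z in S1, ENNReal.ofReal (omegaUHP z {z : ℂ | ‖z‖ ≤ r}) ∂μ)
        ≤ ∫⁻ _ in S1, 1 ∂μ := by
          refine setLIntegral_mono' hS1m fun z hz => ?_
          rw [← ENNReal.ofReal_one]
          exact ENNReal.ofReal_le_ofReal (omega_le_one hz.1 _)
      _ = μ S1 := setLIntegral_one _
  have b2 : (∫⁻ z in S2, ENNReal.ofReal (omegaUHP z {z : ℂ | ‖z‖ ≤ r}) ∂μ) ≤ C * I := by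
    calc (∫⁻ z in S2, ENNReal.ofReal (omegaUHP z {z : ℂ | ‖z‖ ≤ r}) ∂μ)
        ≤ ∫⁻ z in S2, C * ENNReal.ofReal (z.im / ‖z‖ ^ 2) ∂μ := by
          refine setLIntegral_mono' hS2m fun z hz => ?_
          rw [hC, ← ENNReal.ofReal_mul (by positivity)]
          exact ENNReal.ofReal_le_ofReal (omega_disc_le hz.1 hr hg hz.2)
      _ = C * I := lintegral_const_mul' _ _ ENNReal.ofReal_ne_top
  have b3 : μ S1 + μ ({z : ℂ | ‖z‖ ≤ r} ∩ {z : ℂ | z.im ≤ 0})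
      ≤ μ {z : ℂ | ‖z‖ ≤ g} := by
    rw [← measure_union ?_ ((measurableSet_le habs measurable_const).inter
      (measurableSet_le Complex.measurable_im measurable_const))]
    · refine measure_mono fun z hz => ?_
      rcases hz with h | h
      · exact h.2
      · exact le_trans h.1 (le_of_lt hg)
    · refine Set.disjoint_left.2 fun z h1 h2 => ?_
      exact absurd h2.2 (not_le.2 h1.1)
  unfold balUHP
  calc (∫⁻ z in {z : ℂ | 0 < z.im},
        ENNReal.ofReal (omegaUHP z {z : ℂ | ‖z‖ ≤ r}) ∂μ)
        + μ ({z : ℂ | ‖z‖ ≤ r} ∩ {z : ℂ | z.im ≤ 0})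
      ≤ (μ S1 + C * I) + μ ({z : ℂ | ‖z‖ ≤ r} ∩ {z : ℂ | z.im ≤ 0}) := by
        exact add_le_add_left (step1.trans (add_le_add b1 b2)) _
    _ = (μ S1 + μ ({z : ℂ | ‖z‖ ≤ r} ∩ {z : ℂ | z.im ≤ 0})) + C * I := by ring
    _ ≤ μ {z : ℂ | ‖z‖ ≤ g} + C * I := add_le_add_left b3 _

lemma abs_meas : Measurable (fun z : ℂ => ‖z‖) := continuous_norm.measurable

lemma SR_meas (R : ℝ) : MeasurableSet {z : ℂ | 0 < z.im ∧ R ≤ ‖z‖} :=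
  measurable_im_pos.inter (measurableSet_le measurable_const abs_meas)

lemma tail_small (μ : Measure ℂ)
    (hB : ∃ r₀ > (0 : ℝ),
      (∫⁻ z in {z : ℂ | 0 < z.im ∧ r₀ ≤ ‖z‖},
        ENNReal.ofReal (z.im / ‖z‖ ^ 2) ∂μ) < ⊤)
    {ε : ℝ≥0∞} (hε : 0 < ε) :
    ∃ R₁ : ℝ, ∀ R : ℝ, R₁ ≤ R →
      (∫⁻ z in {z : ℂ | 0 < z.im ∧ R ≤ ‖z‖},
        ENNReal.ofReal (z.im / ‖z‖ ^ 2) ∂μ) ≤ ε := by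
  obtain ⟨r₀, hr₀, hfin⟩ := hB
  set f : ℂ → ℝ≥0∞ := fun z => ENNReal.ofReal (z.im / ‖z‖ ^ 2) with hf
  set S : Set ℂ := {z : ℂ | 0 < z.im ∧ r₀ ≤ ‖z‖} with hS
  set ν : Measure ℂ := (μ.restrict S).withDensity f with hν
  have hνA : ∀ A : Set ℂ, MeasurableSet A → ν A = ∫⁻ z in A ∩ S, f z ∂μ := by
    intro A hA
    rw [hν, withDensity_apply _ hA, Measure.restrict_restrict hA]
  set A : ℕ → Set ℂ := fun n => {z : ℂ | (n : ℝ) ≤ ‖z‖} with hA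
  have hAm : ∀ n, MeasurableSet (A n) := fun n => measurableSet_le measurable_const abs_meas
  have hmono : Antitone A := by
    intro m n hmn z hz
    have : (m : ℝ) ≤ (n : ℝ) := Nat.cast_le.mpr hmn
    exact le_trans this hz
  have hempty : (⋂ n, A n) = ∅ := by
    ext z
    simp only [Set.mem_iInter, Set.mem_empty_iff_false, iff_false, not_forall]
    obtain ⟨n, hn⟩ := exists_nat_gt (‖z‖)
    exact ⟨n, by simp [hA]; exact hn⟩
  have hν0 : ν (A 0) ≠ ⊤ := by
    rw [hνA (A 0) (hAm 0)]
    refine ne_of_lt (lt_of_le_of_lt ?_ hfin)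
    exact lintegral_mono' (Measure.restrict_mono Set.inter_subset_right le_rfl) le_rfl
  have htend : Tendsto (ν ∘ A) atTop (nhds 0) := by
    have := tendsto_measure_iInter_atTop (μ := ν) (fun n => (hAm n).nullMeasurableSet) hmono ⟨0, hν0⟩
    rwa [hempty, measure_empty] at this
  have hev : ∃ n : ℕ, ν (A n) ≤ ε := by
    have := (htend.eventually_le_const hε).exists
    exact this
  obtain ⟨n, hn⟩ := hev
  refine ⟨max (n : ℝ) r₀, fun R hR => ?_⟩
  have hsub : {z : ℂ | 0 < z.im ∧ R ≤ ‖z‖} ⊆ A n ∩ S := by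
    intro z hz
    constructor
    · exact le_trans (le_trans (le_max_left _ _) hR) hz.2
    · exact ⟨hz.1, le_trans (le_trans (le_max_right _ _) hR) hz.2⟩
  calc (∫⁻ z in {z : ℂ | 0 < z.im ∧ R ≤ ‖z‖}, f z ∂μ)
      ≤ ∫⁻ z in A n ∩ S, f z ∂μ :=
        lintegral_mono' (Measure.restrict_mono hsub le_rfl) le_rfl
    _ = ν (A n) := (hνA (A n) (hAm n)).symm
    _ ≤ ε := hn

lemma dyadic_scalar {p R : ℝ} (hR0 : 0 < R) (k : ℕ) :
    ((2:ℝ) ^ (k+1) * R) ^ p * ((2:ℝ) ^ k * R)⁻¹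
      = 2 ^ p * R ^ (p - 1) * ((2:ℝ) ^ (p - 1)) ^ k := by
  have h2 : (0:ℝ) < 2 := two_pos
  have hpow1 : (0:ℝ) < (2:ℝ) ^ (k+1) := by positivity
  have hpow2 : (0:ℝ) < (2:ℝ) ^ k := by positivity
  rw [Real.mul_rpow hpow1.le hR0.le, mul_inv]
  rw [← Real.rpow_natCast 2 (k+1), ← Real.rpow_natCast 2 k]
  rw [← Real.rpow_natCast ((2:ℝ) ^ (p-1)) k, ← Real.rpow_mul h2.le]
  rw [← Real.rpow_neg h2.le, ← Real.rpow_mul h2.le]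
  rw [← Real.rpow_neg_one R]
  rw [show ((k+1 : ℕ):ℝ) = (k:ℝ)+1 by push_cast; ring]
  calc (2:ℝ) ^ (((k:ℝ)+1) * p) * R ^ p * ((2:ℝ) ^ (-(k:ℝ)) * R ^ (-1:ℝ))
      = ((2:ℝ) ^ (((k:ℝ)+1) * p) * (2:ℝ) ^ (-(k:ℝ))) * (R ^ p * R ^ (-1:ℝ)) := by
        push_cast; ring
    _ = (2:ℝ) ^ (((k:ℝ)+1) * p + -(k:ℝ)) * R ^ (p + (-1:ℝ)) := by
        rw [← Real.rpow_add h2, ← Real.rpow_add hR0]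
    _ = 2 ^ p * R ^ (p - 1) * (2:ℝ) ^ ((p-1) * (k:ℝ)) := by
        rw [show ((k:ℝ)+1) * p + -(k:ℝ) = p + (p-1)*(k:ℝ) by ring,
          Real.rpow_add h2, show p + (-1:ℝ) = p - 1 by ring]
        ring

lemma tail_dyadic (μ : Measure ℂ) {p : ℝ} (hp0 : 0 ≤ p) {C : ℝ≥0∞}
    {r₁ : ℝ} (hr₁ : 1 ≤ r₁)
    (hμ : ∀ s : ℝ, r₁ ≤ s → μ {z : ℂ | ‖z‖ ≤ s} ≤ C * ENNReal.ofReal (s ^ p)) :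
    ∀ R : ℝ, r₁ ≤ R →
      (∫⁻ z in {z : ℂ | 0 < z.im ∧ R ≤ ‖z‖},
          ENNReal.ofReal (z.im / ‖z‖ ^ 2) ∂μ)
        ≤ C * (1 - ENNReal.ofReal (2 ^ (p - 1)))⁻¹ * ENNReal.ofReal (2 ^ p * R ^ (p - 1)) := by
  intro R hR
  have hR0 : (0:ℝ) < R := lt_of_lt_of_le one_pos (le_trans hr₁ hR)
  set q : ℝ := (2:ℝ) ^ (p - 1) with hq
  have hq0 : 0 ≤ q := le_of_lt (Real.rpow_pos_of_pos two_pos _)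
  set B : ℕ → Set ℂ := fun k =>
    {z : ℂ | (2:ℝ) ^ k * R ≤ ‖z‖ ∧ ‖z‖ ≤ (2:ℝ) ^ (k+1) * R} with hB
  have hBm : ∀ k, MeasurableSet (B k) := fun k =>
    (measurableSet_le measurable_const abs_meas).inter
      (measurableSet_le abs_meas measurable_const)
  have hcover : {z : ℂ | 0 < z.im ∧ R ≤ ‖z‖} ⊆ ⋃ k, B k := by
    intro z hz
    set u : ℝ := ‖z‖ / R with hu
    have hu1 : 1 ≤ u := (one_le_div hR0).2 hz.2
    have hfl : ⌊u⌋₊ ≠ 0 := by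
      have : 1 ≤ ⌊u⌋₊ := Nat.one_le_iff_ne_zero.2 (by
        intro h
        have := Nat.floor_eq_zero.1 h
        linarith)
      omega
    set k : ℕ := Nat.log 2 ⌊u⌋₊ with hk
    refine Set.mem_iUnion.2 ⟨k, ?_, ?_⟩
    · have h1 : ((2 ^ k : ℕ) : ℝ) ≤ (⌊u⌋₊ : ℝ) := Nat.cast_le.2 (Nat.pow_log_le_self 2 hfl)
      have h2 : (⌊u⌋₊ : ℝ) ≤ u := Nat.floor_le (by linarith)
      have h3 : (2:ℝ) ^ k ≤ u := by push_cast at h1; linarith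
      calc (2:ℝ) ^ k * R ≤ u * R := by nlinarith
        _ = ‖z‖ := by rw [hu, div_mul_cancel₀ _ hR0.ne']
    · have h1 : ⌊u⌋₊ < 2 ^ (k + 1) := Nat.lt_pow_succ_log_self (by norm_num) _
      have h2 : u < (⌊u⌋₊ : ℝ) + 1 := Nat.lt_floor_add_one u
      have h3 : ((⌊u⌋₊ : ℝ) + 1) ≤ ((2:ℕ) ^ (k+1) : ℝ) := by
        have : ⌊u⌋₊ + 1 ≤ 2 ^ (k+1) := h1
        exact_mod_cast Nat.cast_le.2 this
      have h4 : u ≤ (2:ℝ) ^ (k+1) := by push_cast at h3; linarith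
      calc ‖z‖ = u * R := by rw [hu, div_mul_cancel₀ _ hR0.ne']
        _ ≤ (2:ℝ) ^ (k+1) * R := by nlinarith
  have hterm : ∀ k : ℕ,
      (∫⁻ z in B k, ENNReal.ofReal (z.im / ‖z‖ ^ 2) ∂μ)
        ≤ C * ENNReal.ofReal (2 ^ p * R ^ (p-1)) * ENNReal.ofReal (q ^ k) := by
    intro k
    have hpk : (0:ℝ) < (2:ℝ) ^ k * R := by positivity
    have hbound : ∀ z ∈ B k,
        ENNReal.ofReal (z.im / ‖z‖ ^ 2) ≤ ENNReal.ofReal (((2:ℝ) ^ k * R)⁻¹) := by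
      intro z hz
      refine ENNReal.ofReal_le_ofReal ?_
      have haz : (0:ℝ) < ‖z‖ := lt_of_lt_of_le hpk hz.1
      have him : z.im ≤ ‖z‖ := le_trans (le_abs_self _) (Complex.abs_im_le_norm z)
      calc z.im / ‖z‖ ^ 2 ≤ ‖z‖ / ‖z‖ ^ 2 := by
            apply div_le_div_of_nonneg_right him (by positivity) |>.trans_eq rfl
        _ = (‖z‖)⁻¹ := by field_simp [sq]
        _ ≤ ((2:ℝ) ^ k * R)⁻¹ := by
            exact inv_anti₀ hpk hz.1
    calc (∫⁻ z in B k, ENNReal.ofReal (z.im / ‖z‖ ^ 2) ∂μ)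
        ≤ ∫⁻ _ in B k, ENNReal.ofReal (((2:ℝ) ^ k * R)⁻¹) ∂μ :=
          setLIntegral_mono' (hBm k) hbound
      _ = ENNReal.ofReal (((2:ℝ) ^ k * R)⁻¹) * μ (B k) := setLIntegral_const _ _
      _ ≤ ENNReal.ofReal (((2:ℝ) ^ k * R)⁻¹)
            * (C * ENNReal.ofReal (((2:ℝ) ^ (k+1) * R) ^ p)) := by
          gcongr
          refine le_trans (measure_mono fun z hz => hz.2) (hμ _ ?_)
          calc r₁ ≤ R := hR
            _ = 1 * R := (one_mul R).symm
            _ ≤ (2:ℝ) ^ (k+1) * R := by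
                have : (1:ℝ) ≤ (2:ℝ) ^ (k+1) := one_le_pow₀ (by norm_num)
                nlinarith
      _ = C * ENNReal.ofReal (((2:ℝ) ^ (k+1) * R) ^ p * ((2:ℝ) ^ k * R)⁻¹) := by
          rw [ENNReal.ofReal_mul (by positivity)]
          ring
      _ = C * ENNReal.ofReal (2 ^ p * R ^ (p-1)) * ENNReal.ofReal (q ^ k) := by
          rw [dyadic_scalar hR0 k, ENNReal.ofReal_mul (by positivity)]
          ring
  calc (∫⁻ z in {z : ℂ | 0 < z.im ∧ R ≤ ‖z‖},
          ENNReal.ofReal (z.im / ‖z‖ ^ 2) ∂μ)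
      ≤ ∫⁻ z in ⋃ k, B k, ENNReal.ofReal (z.im / ‖z‖ ^ 2) ∂μ :=
        lintegral_mono' (Measure.restrict_mono hcover le_rfl) le_rfl
    _ ≤ ∑' k, ∫⁻ z in B k, ENNReal.ofReal (z.im / ‖z‖ ^ 2) ∂μ :=
        lintegral_iUnion_le _ _
    _ ≤ ∑' k, C * ENNReal.ofReal (2 ^ p * R ^ (p-1)) * ENNReal.ofReal (q ^ k) :=
        ENNReal.tsum_le_tsum hterm
    _ = C * ENNReal.ofReal (2 ^ p * R ^ (p-1)) * ∑' k, ENNReal.ofReal (q ^ k) :=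
        ENNReal.tsum_mul_left
    _ = C * ENNReal.ofReal (2 ^ p * R ^ (p-1)) * (1 - ENNReal.ofReal q)⁻¹ := by
        congr 1
        rw [show (∑' k, ENNReal.ofReal (q ^ k)) = ∑' k, (ENNReal.ofReal q) ^ k from by
          congr 1; funext k; exact ENNReal.ofReal_pow hq0 k]
        exact ENNReal.tsum_geometric _
    _ = C * (1 - ENNReal.ofReal q)⁻¹ * ENNReal.ofReal (2 ^ p * R ^ (p - 1)) := by ring

-- helper: from limsup bound to pointwise eventual measure bound
lemma measure_bound_of_limsup (μ : Measure ℂ) {p : ℝ} {K : ℝ≥0∞}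
    (hK : limsup (fun r : ℝ =>
        μ {z : ℂ | ‖z‖ ≤ r} / ENNReal.ofReal (r ^ p)) atTop < K) :
    ∃ r₂ : ℝ, 1 ≤ r₂ ∧ ∀ s : ℝ, r₂ ≤ s →
      μ {z : ℂ | ‖z‖ ≤ s} ≤ K * ENNReal.ofReal (s ^ p) := by
  have hev := Filter.eventually_lt_of_limsup_lt hK
  obtain ⟨r₂, hr₂⟩ := (Filter.eventually_atTop).1 hev
  refine ⟨max r₂ 1, le_max_right _ _, fun s hs => ?_⟩
  have hs1 : (1:ℝ) ≤ s := le_trans (le_max_right _ _) hs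
  have hsp : (0:ℝ) < s ^ p := Real.rpow_pos_of_pos (by linarith) p
  have h0 : ENNReal.ofReal (s ^ p) ≠ 0 := (ENNReal.ofReal_pos.2 hsp).ne'
  have hf := hr₂ s (le_trans (le_max_left _ _) hs)
  exact (ENNReal.div_le_iff h0 ENNReal.ofReal_ne_top).1 hf.le

lemma div_le_of_le_mul {a b : ℝ≥0∞} {s p : ℝ} (hs1 : (1:ℝ) ≤ s)
    (h : a ≤ b * ENNReal.ofReal (s ^ p)) : a / ENNReal.ofReal (s ^ p) ≤ b := by
  have hsp : (0:ℝ) < s ^ p := Real.rpow_pos_of_pos (by linarith) p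
  exact (ENNReal.div_le_iff (ENNReal.ofReal_pos.2 hsp).ne' ENNReal.ofReal_ne_top).2 h

/-- Proposition `cor:ges`: let `μ` satisfy the Blaschke condition near infinity in the
upper half-plane, with balayage `μ^bal`. (1) If `g(r) > r` for all `r > 0`, then
`μ^bal(D̄(r)) ≤ μ(D̄(g(r))) + (2r·g(r)²/(π(g(r)-r)²))·∫_{|z|≥g(r)} |Im z|/|z|² dμ(z)`.
(2) If `μ` has finite type at order `p ≥ 0` near `∞`, then so has `μ^bal`; and when
`p ≥ 1` one has the sharp estimate
`limsup_{r→∞} μ^bal(D̄(r))/r^p ≤ limsup_{r→∞} μ(D̄(r))/r^p`. -/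
theorem balUHP_radial_growth
    (μ : Measure ℂ) [IsFiniteMeasureOnCompacts μ]
    (hB : ∃ r₀ > (0 : ℝ),
      (∫⁻ z in {z : ℂ | 0 < z.im ∧ r₀ ≤ ‖z‖},
        ENNReal.ofReal (z.im / ‖z‖ ^ 2) ∂μ) < ⊤) :
    (∀ g : ℝ → ℝ, (∀ r : ℝ, 0 < r → r < g r) → ∀ r : ℝ, 0 < r →
      balUHP μ {z : ℂ | ‖z‖ ≤ r}
        ≤ μ {z : ℂ | ‖z‖ ≤ g r}
          + ENNReal.ofReal (2 * r * (g r) ^ 2 / (Real.pi * (g r - r) ^ 2)) *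
              ∫⁻ z in {z : ℂ | g r ≤ ‖z‖},
                ENNReal.ofReal (|z.im| / ‖z‖ ^ 2) ∂μ) ∧
    (∀ p : ℝ, 0 ≤ p →
      limsup (fun r : ℝ =>
          μ {z : ℂ | ‖z‖ ≤ r} / ENNReal.ofReal (r ^ p)) atTop < ⊤ →
      (limsup (fun r : ℝ =>
          balUHP μ {z : ℂ | ‖z‖ ≤ r} / ENNReal.ofReal (r ^ p)) atTop < ⊤ ∧
        (1 ≤ p →
          limsup (fun r : ℝ =>
              balUHP μ {z : ℂ | ‖z‖ ≤ r} / ENNReal.ofReal (r ^ p)) atTop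
            ≤ limsup (fun r : ℝ =>
              μ {z : ℂ | ‖z‖ ≤ r} / ENNReal.ofReal (r ^ p)) atTop))) := by
  constructor
  · -- Part (1)
    intro g hgr r hr
    have hg := hgr r hr
    refine (main_est μ hr hg).trans (add_le_add_right (mul_le_mul_right ?_ _) _)
    calc (∫⁻ z in {z : ℂ | 0 < z.im ∧ g r ≤ ‖z‖},
            ENNReal.ofReal (z.im / ‖z‖ ^ 2) ∂μ)
        ≤ ∫⁻ z in {z : ℂ | 0 < z.im ∧ g r ≤ ‖z‖},
            ENNReal.ofReal (|z.im| / ‖z‖ ^ 2) ∂μ := by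
          refine lintegral_mono fun z => ENNReal.ofReal_le_ofReal ?_
          rcases eq_or_lt_of_le (sq_nonneg (‖z‖)) with h | h
          · rw [← h, div_zero, div_zero]
          · exact div_le_div_of_nonneg_right (le_abs_self _) h.le
      _ ≤ ∫⁻ z in {z : ℂ | g r ≤ ‖z‖},
            ENNReal.ofReal (|z.im| / ‖z‖ ^ 2) ∂μ :=
          lintegral_mono' (Measure.restrict_mono (fun z hz => hz.2) le_rfl) le_rfl
  · -- Part (2)
    intro p hp0 hL
    set L := limsup (fun r : ℝ =>
        μ {z : ℂ | ‖z‖ ≤ r} / ENNReal.ofReal (r ^ p)) atTop with hLdef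
    by_cases hp1 : 1 ≤ p
    · -- sharp case
      have sharp : limsup (fun r : ℝ =>
          balUHP μ {z : ℂ | ‖z‖ ≤ r} / ENNReal.ofReal (r ^ p)) atTop ≤ L := by
        refine ENNReal.le_of_forall_pos_le_add fun ε hε _ => ?_
        set l : ℝ := L.toReal with hl
        have hl0 : 0 ≤ l := ENNReal.toReal_nonneg
        have hLl : L = ENNReal.ofReal l := (ENNReal.ofReal_toReal hL.ne).symm
        have hεR : (0:ℝ) < (ε:ℝ) := hε
        set η : ℝ := (ε:ℝ)/3 with hη
        have hη0 : 0 < η := by positivity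
        -- choose δ
        have hcont : Tendsto (fun δ : ℝ => (1+δ) ^ p) (nhdsWithin 0 (Set.Ioi (0:ℝ))) (nhds 1) := by
          have h1 : ContinuousAt (fun x : ℝ => x ^ p) 1 :=
            Real.continuousAt_rpow_const 1 p (Or.inl one_ne_zero)
          have h2 : Tendsto (fun δ : ℝ => 1 + δ) (nhds 0) (nhds 1) := by
            simpa using (tendsto_id : Tendsto id (nhds (0:ℝ)) (nhds 0)).const_add 1
          have := (h1.tendsto.comp h2).mono_left (nhdsWithin_le_nhds (s := Set.Ioi (0:ℝ)))
          simpa [Real.one_rpow, Function.comp_def] using this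
        have hc1 : (1:ℝ) < (l + 2*(ε:ℝ)/3)/(l + (ε:ℝ)/3) := by
          rw [lt_div_iff₀ (by linarith)]
          linarith
        obtain ⟨δ, hδc, hδ0⟩ :=
          ((hcont.eventually_lt_const hc1).and eventually_mem_nhdsWithin).exists
        rw [Set.mem_Ioi] at hδ0
        -- thresholds
        have hKη : L < L + ENNReal.ofReal η :=
          ENNReal.lt_add_right hL.ne (ENNReal.ofReal_pos.2 hη0).ne'
        obtain ⟨r₂, hr₂1, hr₂⟩ := measure_bound_of_limsup μ hKη
        set Kδ : ℝ := 2*(1+δ)^2/(Real.pi*δ^2) with hKδ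
        have hKδ0 : 0 < Kδ := by
          rw [hKδ]; positivity
        obtain ⟨R₁, hR₁⟩ := tail_small μ hB
          (ε := ENNReal.ofReal (η/Kδ)) (ENNReal.ofReal_pos.2 (by positivity))
        set M : ℝ≥0∞ := ENNReal.ofReal ((l + η) * (1+δ) ^ p) + ENNReal.ofReal η with hM
        have hev : ∀ᶠ r in atTop,
            balUHP μ {z : ℂ | ‖z‖ ≤ r} / ENNReal.ofReal (r ^ p) ≤ M := by
          filter_upwards [eventually_ge_atTop (max (max 1 r₂) (max R₁ 0))] with r hr
          have hr1 : (1:ℝ) ≤ r := le_trans (le_max_left _ _) (le_trans (le_max_left _ _) hr)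
          have hrr₂ : r₂ ≤ r := le_trans (le_max_right _ _) (le_trans (le_max_left _ _) hr)
          have hrR₁ : R₁ ≤ r := le_trans (le_max_left _ _) (le_trans (le_max_right _ _) hr)
          have hr0 : (0:ℝ) < r := by linarith
          have hg : r < (1+δ)*r := by nlinarith
          have est := main_est μ hr0 hg
          have hconst : 2 * r * ((1+δ)*r) ^ 2 / (Real.pi * ((1+δ)*r - r) ^ 2) = Kδ * r := by
            rw [hKδ]
            have : ((1+δ)*r - r) = δ * r := by ring
            rw [this]
            field_simp
          have hb1 : μ {z : ℂ | ‖z‖ ≤ (1+δ)*r}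
              ≤ ENNReal.ofReal ((l + η) * (1+δ) ^ p) * ENNReal.ofReal (r ^ p) := by
            have h := hr₂ ((1+δ)*r) (le_trans hrr₂ (by nlinarith))
            have heq : ((1+δ)*r) ^ p = (1+δ) ^ p * r ^ p :=
              Real.mul_rpow (by linarith) hr0.le
            have hLη : L + ENNReal.ofReal η = ENNReal.ofReal (l + η) := by
              rw [hLl, ENNReal.ofReal_add hl0 hη0.le]
            rw [heq, hLη] at h
            refine h.trans_eq ?_
            rw [ENNReal.ofReal_mul (by positivity), ENNReal.ofReal_mul (by positivity),
              mul_assoc]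
          have hb2 : ENNReal.ofReal (Kδ * r) *
              (∫⁻ z in {z : ℂ | 0 < z.im ∧ (1+δ)*r ≤ ‖z‖},
                ENNReal.ofReal (z.im / ‖z‖ ^ 2) ∂μ)
              ≤ ENNReal.ofReal η * ENNReal.ofReal (r ^ p) := by
            have htail := hR₁ ((1+δ)*r) (le_trans hrR₁ (by nlinarith))
            calc ENNReal.ofReal (Kδ * r) * _
                ≤ ENNReal.ofReal (Kδ * r) * ENNReal.ofReal (η/Kδ) := by gcongr
              _ = ENNReal.ofReal (η * r) := by
                  rw [← ENNReal.ofReal_mul (by positivity)]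
                  congr 1
                  field_simp
              _ ≤ ENNReal.ofReal (η * r ^ p) := by
                  refine ENNReal.ofReal_le_ofReal ?_
                  have : r ≤ r ^ p := by
                    calc r = r ^ (1:ℝ) := (Real.rpow_one r).symm
                      _ ≤ r ^ p := Real.rpow_le_rpow_of_exponent_le hr1 hp1
                  nlinarith
              _ = ENNReal.ofReal η * ENNReal.ofReal (r ^ p) :=
                  ENNReal.ofReal_mul hη0.le
          have : balUHP μ {z : ℂ | ‖z‖ ≤ r} ≤ M * ENNReal.ofReal (r ^ p) := by
            refine est.trans ?_
            rw [hconst, hM]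
            exact (add_le_add hb1 hb2).trans_eq (add_mul _ _ _).symm
          exact div_le_of_le_mul hr1 this
        refine (limsup_le_of_le (by isBoundedDefault) hev).trans ?_
        -- M ≤ L + ε
        have hreal : (l + η) * (1+δ) ^ p + η ≤ l + (ε:ℝ) := by
          have h1 : (l + η) * (1+δ) ^ p ≤ (l + η) * ((l + 2*(ε:ℝ)/3)/(l + (ε:ℝ)/3)) := by
            have : (0:ℝ) ≤ l + η := by linarith
            nlinarith [Real.rpow_pos_of_pos (show (0:ℝ) < 1+δ by linarith) p]
          have h2 : (l + η) * ((l + 2*(ε:ℝ)/3)/(l + (ε:ℝ)/3)) = l + 2*(ε:ℝ)/3 := by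
            rw [hη]
            field_simp
          rw [h2] at h1
          rw [hη] at *
          linarith
        calc M ≤ ENNReal.ofReal ((l + η) * (1+δ) ^ p + η) := by
              rw [hM, ENNReal.ofReal_add (by positivity) hη0.le]
          _ ≤ ENNReal.ofReal (l + (ε:ℝ)) := ENNReal.ofReal_le_ofReal hreal
          _ = L + ε := by
              rw [ENNReal.ofReal_add hl0 hεR.le, ← hLl, ENNReal.ofReal_coe_nnreal]
      exact ⟨lt_of_le_of_lt sharp hL, fun _ => sharp⟩
    · -- p < 1 case
      push_neg at hp1
      have hC : L < L + 1 := ENNReal.lt_add_right hL.ne one_ne_zero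
      obtain ⟨r₂, hr₂1, hr₂⟩ := measure_bound_of_limsup μ hC
      set C : ℝ≥0∞ := L + 1 with hCdef
      have hCne : C ≠ ⊤ := by
        rw [hCdef]
        exact ENNReal.add_ne_top.2 ⟨hL.ne, ENNReal.one_ne_top⟩
      have hdy := tail_dyadic μ hp0 hr₂1 hr₂
      set Cq : ℝ≥0∞ := (1 - ENNReal.ofReal (2 ^ (p - 1)))⁻¹ with hCq
      have hCqne : Cq ≠ ⊤ := by
        rw [hCq, Ne, ENNReal.inv_eq_top]
        have hq1 : (2:ℝ) ^ (p-1) < 1 :=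
          Real.rpow_lt_one_of_one_lt_of_neg one_lt_two (by linarith)
        have : ENNReal.ofReal ((2:ℝ) ^ (p-1)) < 1 := by
          rw [← ENNReal.ofReal_one]
          exact ENNReal.ofReal_lt_ofReal_iff_of_nonneg (by positivity) |>.2 hq1
        exact (tsub_pos_of_lt this).ne'
      set K : ℝ≥0∞ := C * ENNReal.ofReal ((2:ℝ) ^ p)
          + C * Cq * ENNReal.ofReal (8/Real.pi * 2 ^ p * 2 ^ (p-1)) with hK
      have hKne : K ≠ ⊤ := by
        rw [hK]
        refine ENNReal.add_ne_top.2 ⟨?_, ?_⟩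
        · exact ENNReal.mul_ne_top hCne ENNReal.ofReal_ne_top
        · exact ENNReal.mul_ne_top (ENNReal.mul_ne_top hCne hCqne) ENNReal.ofReal_ne_top
      have hev : ∀ᶠ r in atTop,
          balUHP μ {z : ℂ | ‖z‖ ≤ r} / ENNReal.ofReal (r ^ p) ≤ K := by
        filter_upwards [eventually_ge_atTop (max 1 r₂)] with r hr
        have hr1 : (1:ℝ) ≤ r := le_trans (le_max_left _ _) hr
        have hrr₂ : r₂ ≤ r := le_trans (le_max_right _ _) hr
        have hr0 : (0:ℝ) < r := by linarith
        have hg : r < 2*r := by linarith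
        have est := main_est μ hr0 hg
        have hconst : 2 * r * (2*r) ^ 2 / (Real.pi * (2*r - r) ^ 2) = 8/Real.pi * r := by
          have : (2*r - r) = r := by ring
          rw [this]
          field_simp
          ring
        have hb1 : μ {z : ℂ | ‖z‖ ≤ 2*r}
            ≤ C * ENNReal.ofReal ((2:ℝ) ^ p) * ENNReal.ofReal (r ^ p) := by
          have h := hr₂ (2*r) (by linarith)
          have heq : ((2:ℝ)*r) ^ p = (2:ℝ) ^ p * r ^ p := Real.mul_rpow (by norm_num) hr0.le
          rw [heq, ENNReal.ofReal_mul (by positivity), ← mul_assoc] at h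
          exact h
        have hb2 : ENNReal.ofReal (8/Real.pi * r) *
            (∫⁻ z in {z : ℂ | 0 < z.im ∧ 2*r ≤ ‖z‖},
              ENNReal.ofReal (z.im / ‖z‖ ^ 2) ∂μ)
            ≤ C * Cq * ENNReal.ofReal (8/Real.pi * 2 ^ p * 2 ^ (p-1)) * ENNReal.ofReal (r ^ p) := by
          have htail := hdy (2*r) (by linarith)
          calc ENNReal.ofReal (8/Real.pi * r) * _
              ≤ ENNReal.ofReal (8/Real.pi * r) *
                (C * Cq * ENNReal.ofReal (2 ^ p * (2*r) ^ (p - 1))) := by gcongr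
            _ = C * Cq * (ENNReal.ofReal (8/Real.pi * r) *
                  ENNReal.ofReal (2 ^ p * (2*r) ^ (p - 1))) := by ring
            _ = C * Cq * ENNReal.ofReal (8/Real.pi * 2 ^ p * 2 ^ (p-1) * r ^ p) := by
                rw [← ENNReal.ofReal_mul (by positivity)]
                congr 1
                have h1 : ((2:ℝ)*r) ^ (p-1) = (2:ℝ) ^ (p-1) * r ^ (p-1) :=
                  Real.mul_rpow (by norm_num) hr0.le
                have h2 : r * r ^ (p-1) = r ^ p := by
                  nth_rewrite 1 [← Real.rpow_one r]
                  rw [← Real.rpow_add hr0]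
                  norm_num
                rw [h1, show 8/Real.pi * r * (2 ^ p * ((2:ℝ) ^ (p-1) * r ^ (p-1)))
                    = 8/Real.pi * 2 ^ p * 2 ^ (p-1) * (r * r ^ (p-1)) by ring, h2]
            _ = C * Cq * ENNReal.ofReal (8/Real.pi * 2 ^ p * 2 ^ (p-1)) * ENNReal.ofReal (r ^ p) := by
                rw [ENNReal.ofReal_mul (by positivity)]
                ring
        have : balUHP μ {z : ℂ | ‖z‖ ≤ r} ≤ K * ENNReal.ofReal (r ^ p) := by
          refine est.trans ?_
          rw [hconst, hK]
          exact (add_le_add hb1 hb2).trans_eq (add_mul _ _ _).symm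
        exact div_le_of_le_mul hr1 this
      refine ⟨lt_of_le_of_lt (limsup_le_of_le (by isBoundedDefault) hev) hKne.lt_top,
        fun h1p => absurd h1p (not_le.2 hp1)⟩
end

section
/- Let q be a natural number (q ≥ 0) and z a complex number. Define, for t > 0, the truncated Weierstrass–Hadamard kernel of genus q by K_q(z,t) := log|t − z| − log t + Σ_{j=1}^{q} (1/j)·Re((z/t)^j). Then for every t > 0 with (t : ℂ) ≠ z, the function t ↦ K_q(z,t) is differentiable at t with derivative d/dt K_q(z,t) = Re( z^{q+1} / (t^{q+1}·(t − z)) ). -/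
open Real

private lemma whKeyId (q : ℕ) (t z : ℂ) (ht : t ≠ 0) (htz : t - z ≠ 0) :
    (t - z)⁻¹ - t⁻¹ - ∑ j ∈ Finset.range q, z ^ (j + 1) / t ^ (j + 2)
      = z ^ (q + 1) / (t ^ (q + 1) * (t - z)) := by
  induction q with
  | zero =>
    simp only [Finset.range_zero, Finset.sum_empty, sub_zero, pow_one]
    rw [inv_sub_inv htz ht, show t - (t - z) = z from by ring, mul_comm]
    norm_num
  | succ n ih =>
    rw [Finset.sum_range_succ, sub_add_eq_sub_sub, ih]
    field_simp
    ring

/-- The truncated Weierstrass–Hadamard kernel of genus `q` evaluated at a point `t` of the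
positive real axis: `K_q(z,t) = log|t - z| - log t + Σ_{j=1}^{q} (1/j)·Re((z/t)^j)`. -/
noncomputable def WHkernel (q : ℕ) (z : ℂ) (t : ℝ) : ℝ :=
  Real.log ‖(t : ℂ) - z‖ - Real.log t
    + ∑ j ∈ Finset.range q, (1 / (j + 1 : ℝ)) * ((z / (t : ℂ)) ^ (j + 1)).re

/-- Proposition `pr:nR+`, formula for the derivative of the Weierstrass–Hadamard kernel:
for `t > 0` with `(t : ℂ) ≠ z` one has
`d/dt K_q(z,t) = Re( z^{q+1} / (t^{q+1}·(t - z)) )`. -/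
theorem hasDerivAt_WHkernel
    (q : ℕ) (z : ℂ) (t : ℝ) (ht : 0 < t) (htz : (t : ℂ) ≠ z) :
    HasDerivAt (fun s : ℝ => WHkernel q z s)
      ((z ^ (q + 1) / ((t : ℂ) ^ (q + 1) * ((t : ℂ) - z))).re) t := by
  have ht0 : t ≠ 0 := ht.ne'
  have htz' : (t : ℂ) - z ≠ 0 := sub_ne_zero.mpr htz
  -- rewrite the kernel in a more convenient form
  have hfun : ∀ s : ℝ, WHkernel q z s =
      Real.log ((s - z.re) ^ 2 + z.im ^ 2) / 2 - Real.log s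
        + ∑ j ∈ Finset.range q, (1 / (j + 1 : ℝ)) * ((z ^ (j + 1)).re * (s ^ (j + 1))⁻¹) := by
    intro s
    unfold WHkernel
    congr 1
    · congr 1
      rw [Complex.norm_def, Real.log_sqrt (Complex.normSq_nonneg _)]
      congr 1
      simp [Complex.normSq_apply]
      ring
    · refine Finset.sum_congr rfl fun j _ => ?_
      congr 1
      rcases eq_or_ne s 0 with rfl | hs
      · simp [zero_pow (Nat.succ_ne_zero j)]
      · rw [div_pow, ← Complex.ofReal_pow, Complex.div_ofReal_re]
        rw [div_eq_mul_inv]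
  -- denominator for the log-abs term
  have hD : (t - z.re) ^ 2 + z.im ^ 2 ≠ 0 := by
    intro h
    have h1 : (t - z.re) ^ 2 = 0 ∧ z.im ^ 2 = 0 := by
      constructor <;> nlinarith [sq_nonneg (t - z.re), sq_nonneg z.im]
    apply htz
    have hre : z.re = t := by nlinarith [h1.1]
    have him : z.im = 0 := by nlinarith [h1.2]
    apply Complex.ext <;> simp [hre, him]
  -- derivative of the log-abs term
  have h1 : HasDerivAt (fun s : ℝ => Real.log ((s - z.re) ^ 2 + z.im ^ 2) / 2)
      ((((t : ℂ) - z)⁻¹).re) t := by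
    have hinner : HasDerivAt (fun s : ℝ => (s - z.re) ^ 2 + z.im ^ 2)
        (2 * (t - z.re)) t := by
      have := ((hasDerivAt_id t).sub_const z.re).pow 2
      simpa using this.add_const (z.im ^ 2)
    have := (hinner.log hD).div_const 2
    refine this.congr_deriv (Eq.symm ?_)
    rw [Complex.inv_re, show 2 * (t - z.re) / ((t - z.re) ^ 2 + z.im ^ 2) / 2
      = (t - z.re) / ((t - z.re) ^ 2 + z.im ^ 2) from by ring]
    congr 1
    simp [Complex.normSq_apply]
    ring
  -- derivative of the log t term
  have h2 : HasDerivAt (fun s : ℝ => Real.log s) t⁻¹ t := Real.hasDerivAt_log ht0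
  -- derivative of each summand
  have h3 : ∀ j ∈ Finset.range q, HasDerivAt
      (fun s : ℝ => (1 / (j + 1 : ℝ)) * ((z ^ (j + 1)).re * (s ^ (j + 1))⁻¹))
      ((-(z ^ (j + 1)) / (t : ℂ) ^ (j + 2)).re) t := by
    intro j _
    have hp : HasDerivAt (fun s : ℝ => (s ^ (j + 1))⁻¹)
        (-(((j + 1 : ℕ) : ℝ) * t ^ j) / (t ^ (j + 1)) ^ 2) t := by
      have := (hasDerivAt_pow (j + 1) t).inv (pow_ne_zero _ ht0)
      exact this
    have := (hp.const_mul ((z ^ (j + 1)).re)).const_mul (1 / (j + 1 : ℝ))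
    refine this.congr_deriv (Eq.symm ?_)
    rw [show (-(z ^ (j + 1)) / (t : ℂ) ^ (j + 2)) = -(z ^ (j + 1)) / ((t ^ (j + 2) : ℝ) : ℂ) by
      push_cast; ring]
    rw [Complex.div_ofReal_re]
    simp only [Complex.neg_re]
    have : ((j : ℝ) + 1) ≠ 0 := by positivity
    field_simp
    push_cast; ring
  have hsum := HasDerivAt.fun_sum h3
  have htotal := (h1.sub h2).add hsum
  have heq : HasDerivAt (fun s : ℝ => WHkernel q z s)
      ((((t : ℂ) - z)⁻¹).re - t⁻¹
        + ∑ j ∈ Finset.range q, (-(z ^ (j + 1)) / (t : ℂ) ^ (j + 2)).re) t := by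
    refine htotal.congr_of_eventuallyEq ?_
    filter_upwards with s
    rw [hfun s]
    rfl
  convert heq using 1
  have : t⁻¹ = (((t : ℂ))⁻¹).re := by
    rw [← Complex.ofReal_inv, Complex.ofReal_re]
  rw [this, ← Complex.sub_re, ← Complex.re_sum, ← Complex.add_re]
  congr 1
  rw [← whKeyId q t z (by exact_mod_cast ht0) htz']
  simp only [neg_div, Finset.sum_neg_distrib]
  ring
end
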